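/- arXiv:1503.08310 — 3 statements merged into one kernel-verified Lean document; each statement's English description precedes it below -/
import Mathlib

section
/- Let n be even, let S ⊆ Z ⊆ [n]² with |S| = 4s for some s ≥ 1 and |Z| = z, and suppose z + 2(4k+r+2)²(4rs) ≤ n²/2 and 4erz ≤ n²/2. Let M = (M₁,…,M_r) be a k-admissible r-tuple of perfect matchings of [n]² chosen uniformly at random. Then the probability that every vertex of S is matched by at least one matching of M to a vertex of Z is at most (16rz/n²)^{2s}. -/
open Finset Filter

namespace Maj

variable {V : Type*}

/-- The set of neighbours of `v` under the adjacency relation `Adj`. -/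
def nbrSet (Adj : V → V → Prop) (v : V) : Set V := {u | Adj v u}

/-- One round of the `r`-majority bootstrap percolation process: an inactive vertex `v`
becomes active if at least `⌈(deg v + r)/2⌉` of its neighbours are active, i.e. if
`deg v + r ≤ 2 * #(active neighbours)`. -/
def majStep (Adj : V → V → Prop) (r : ℤ) (A : Set V) : Set V :=
  A ∪ {v | ((nbrSet Adj v).ncard : ℤ) + r ≤ 2 * ((nbrSet Adj v ∩ A).ncard : ℤ)}

/-- The final (stationary) state of `r`-majority bootstrap percolation started from `A`. -/
def majFinal (Adj : V → V → Prop) (r : ℤ) (A : Set V) : Set V :=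
  ⋃ s : ℕ, (majStep Adj r)^[s] A

/-- One round of ordinary bootstrap percolation with activation threshold `j`. -/
def bootStep (Adj : V → V → Prop) (j : ℕ) (A : Set V) : Set V :=
  A ∪ {v | j ≤ (nbrSet Adj v ∩ A).ncard}

/-- The final state of ordinary bootstrap percolation `B_j(G;A)`. -/
def bootFinal (Adj : V → V → Prop) (j : ℕ) (A : Set V) : Set V :=
  ⋃ s : ℕ, (bootStep Adj j)^[s] A

/-- The vertex set of the `j`-core of the subgraph induced on `U`: the largest `W ⊆ U`
such that every vertex of `W` has at least `j` neighbours in `W`. -/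
def coreSet (Adj : V → V → Prop) (j : ℤ) (U : Set V) : Set V :=
  ⋃₀ {W : Set V | W ⊆ U ∧ ∀ v ∈ W, j ≤ ((nbrSet Adj v ∩ W).ncard : ℤ)}

open scoped Classical in
/-- The probability that the random initial set (each vertex initially active with
probability `p`, independently) satisfies the event `E`. -/
noncomputable def initProb (V : Type*) [Fintype V] (p : ℝ) (E : Set V → Prop) : ℝ :=
  ∑ A : Finset V, if E ↑A then p ^ A.card * (1 - p) ^ (Fintype.card V - A.card) else 0

/-- The toroidal grid `[n]²`. -/
abbrev Torus (n : ℕ) := ZMod n × ZMod n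

/-- Adjacency in the graph `L(n,k)`: `v` is joined to `v + w` for
`w ∈ {-k,…,k} × {-1,1}`. -/
def LAdj (n k : ℕ) (u v : Torus n) : Prop :=
  ∃ a b : ℤ, a.natAbs ≤ k ∧ (b = 1 ∨ b = -1) ∧ v = u + ((a : ZMod n), (b : ZMod n))

/-- `initProb` on the torus `[n]²` (defined as `0` in the degenerate case `n = 0`). -/
noncomputable def torusProb (n : ℕ) (p : ℝ) (E : Set (Torus n) → Prop) : ℝ :=
  if h : n = 0 then 0 else
    haveI : NeZero n := ⟨h⟩
    initProb (Torus n) p E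

/-- A perfect matching of the vertex set, as a fixed-point-free involution. -/
def IsPerfectMatching (n : ℕ) (f : Torus n → Torus n) : Prop :=
  Function.Involutive f ∧ ∀ v, f v ≠ v

/-- A `k`-admissible `r`-tuple of perfect matchings of `[n]²`: the matchings are pairwise
disjoint and the union with `L(n,k)` has no multiple edges. -/
def Admissible (n k : ℕ) {r : ℕ} (M : Fin r → Torus n → Torus n) : Prop :=
  (∀ i, IsPerfectMatching n (M i)) ∧
  (∀ i j, i ≠ j → ∀ v, M i v ≠ M j v) ∧
  (∀ i v, ¬ LAdj n k v (M i v))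

/-- Adjacency in `L*(n,k,r) = M₁ ∪ ⋯ ∪ M_r ∪ L(n,k)`. -/
def LStarAdj (n k : ℕ) {r : ℕ} (M : Fin r → Torus n → Torus n) (u v : Torus n) : Prop :=
  LAdj n k u v ∨ ∃ i, M i u = v

open scoped Classical in
/-- The probability that `M_r(L*(n,k,r); p)` disseminates, where the `r` perfect matchings
are chosen uniformly at random among `k`-admissible `r`-tuples and each vertex is
initially active with probability `p`, independently. -/
noncomputable def starDissemProb (n k r : ℕ) (p : ℝ) : ℝ :=
  if h : n = 0 then 0 else
    haveI : NeZero n := ⟨h⟩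
    (∑ M ∈ Finset.univ.filter (fun M : Fin r → Torus n → Torus n => Admissible n k M),
        initProb (Torus n) p (fun A => majFinal (LStarAdj n k M) (r : ℤ) A = Set.univ)) /
      ((Finset.univ.filter (fun M : Fin r → Torus n → Torus n => Admissible n k M)).card : ℝ)

/-- The probability that a uniformly random `k`-admissible `r`-tuple of perfect matchings
of `[n]²` satisfies the event `E`. -/
noncomputable def admProb (n k r : ℕ) (E : (Fin r → Torus n → Torus n) → Prop) : ℝ :=
  (Nat.card {M : Fin r → Torus n → Torus n // Admissible n k M ∧ E M} : ℝ) /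
    (Nat.card {M : Fin r → Torus n → Torus n // Admissible n k M} : ℝ)

/-- `stepsLe Adj d u v`: `v` is reachable from `u` in at most `d` steps of `Adj`. -/
def stepsLe (Adj : V → V → Prop) : ℕ → V → V → Prop
  | 0, u, v => u = v
  | d + 1, u, v => stepsLe Adj d u v ∨ ∃ w, stepsLe Adj d u w ∧ Adj w v

/-- Graph distance with respect to the relation `Adj`. -/
noncomputable def relDist (Adj : V → V → Prop) (u v : V) : ℕ :=
  sInf {d | stepsLe Adj d u v}

/-- The diameter of a set `B` : the maximal `Adj`-graph distance between two of its points. -/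
noncomputable def setDiam (Adj : V → V → Prop) (B : Set V) : ℕ :=
  sSup {d | ∃ u ∈ B, ∃ v ∈ B, relDist Adj u v = d}

/-- `U` induces a connected subgraph with respect to `Adj`. -/
def ConnIn (Adj : V → V → Prop) (U : Set V) : Prop :=
  ∀ u ∈ U, ∀ v ∈ U, Relation.ReflTransGen (fun x y => x ∈ U ∧ y ∈ U ∧ Adj x y) u v

/-- The connected component of `x` inside `Z` (with respect to `Adj`). -/
def compOf (Adj : V → V → Prop) (Z : Set V) (x : V) : Set V :=
  {y | y ∈ Z ∧ Relation.ReflTransGen (fun a b => a ∈ Z ∧ b ∈ Z ∧ Adj a b) x y}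

/-- `B` is a connected component of the subgraph induced on `Z`. -/
def IsComponentOf (Adj : V → V → Prop) (Z B : Set V) : Prop :=
  ∃ x ∈ Z, B = compOf Adj Z x

/-- Adjacency in the toroidal square lattice `L₁(n)`. -/
def l1Adj (n : ℕ) (u v : Torus n) : Prop :=
  (u.1 = v.1 ∧ (v.2 = u.2 + 1 ∨ v.2 = u.2 - 1)) ∨
    (u.2 = v.2 ∧ (v.1 = u.1 + 1 ∨ v.1 = u.1 - 1))

/-- Adjacency in the toroidal lattice with diagonals `L∞(n)`. -/
def lInfAdj (n : ℕ) (u v : Torus n) : Prop :=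
  u ≠ v ∧ (v.1 = u.1 ∨ v.1 = u.1 + 1 ∨ v.1 = u.1 - 1) ∧
    (v.2 = u.2 ∨ v.2 = u.2 + 1 ∨ v.2 = u.2 - 1)

/-- Ceiling division: `cdiv k m = ⌈k/m⌉`. -/
def cdiv (k m : ℕ) : ℕ := (k + m - 1) / m

/-- The sequence `x_i` defining the set `S^k_m(a,b)`. -/
def xseq (k m a b i : ℕ) : ℕ :=
  if m ≤ i then b + (m + a + 1 - i) * k
  else b + (a + 1) * k + cdiv k m * ∑ j ∈ Finset.Ico i m, j

/-- The set `S^k_m(a,b) ⊆ ℤ²`: the union over `|i| ≤ m+a+1` of `[-x_i, x_i] × {i}`. -/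
def Scloud (k m a b : ℕ) : Set (ℤ × ℤ) :=
  {p | p.2.natAbs ≤ m + a + 1 ∧ p.1.natAbs ≤ xseq k m a b p.2.natAbs}

/-- Canonical projection `ℤ² → [n]²`. -/
def proj (n : ℕ) (p : ℤ × ℤ) : Torus n := ((p.1 : ZMod n), (p.2 : ZMod n))

/-- A vertex `v` is `m`-good (with respect to the active set `A`) if each of the four sets
`v ± {1,…,k} × {1}`, `v ± {1,…,k} × {-1}` contains at least `2⌈k/m⌉` active vertices. -/
def MGood (n k m : ℕ) (A : Set (Torus n)) (v : Torus n) : Prop :=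
  ∀ sx sy : ℤ, (sx = 1 ∨ sx = -1) → (sy = 1 ∨ sy = -1) →
    2 * cdiv k m ≤
      {u | u ∈ A ∧ ∃ a : ℤ, 1 ≤ a ∧ a ≤ (k : ℤ) ∧
        u = v + (((sx * a : ℤ) : ZMod n), ((sy : ℤ) : ZMod n))}.ncard

/-- Endpoints `a_i` of the `t`-tessellation: `a_i = i*t` for `i < ⌊n/t⌋` and `a_{⌊n/t⌋} = n`. -/
def cellEnd (n t i : ℕ) : ℕ := if i = n / t then n else i * t

/-- Cells of the `t`-tessellation `T(n,t)`, identified with `[⌊n/t⌋]²`. -/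
abbrev Cell (n t : ℕ) := Torus (n / t)

/-- The set of vertices of `[n]²` in the cell `c = (i,j)` of the `t`-tessellation:
`[a_i+1, a_{i+1}] × [a_j+1, a_{j+1}]`. -/
def cellSet (n t : ℕ) (c : Cell n t) : Set (Torus n) :=
  {v | ∃ x y : ℕ,
    c.1.val * t + 1 ≤ x ∧ x ≤ cellEnd n t (c.1.val + 1) ∧
    c.2.val * t + 1 ≤ y ∧ y ≤ cellEnd n t (c.2.val + 1) ∧
    v = ((x : ZMod n), (y : ZMod n))}

/-- A cell is `m`-good if every vertex inside it or within `ℓ₁`-distance `32mk²` of it is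
`m`-good or active. -/
def CellGood (n t k m : ℕ) (A : Set (Torus n)) (c : Cell n t) : Prop :=
  ∀ w : Torus n, (∃ v ∈ cellSet n t c, stepsLe (l1Adj n) (32 * m * k ^ 2) v w) →
    (MGood n k m A w ∨ w ∈ A)

/-- A cell is a seed if it contains an active translate of `S^k_m(0,0)`. -/
def IsSeed (n t k m : ℕ) (A : Set (Torus n)) (c : Cell n t) : Prop :=
  ∃ w : Torus n, ∀ p ∈ Scloud k m 0 0,
    w + proj n p ∈ A ∧ w + proj n p ∈ cellSet n t c

/-- `Z ⊆ [N]²` is `ε`-ubiquitous (with `A = 10⁸`). -/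
def Ubiquitous (N : ℕ) (ε : ℝ) (Z : Set (Torus N)) : Prop :=
  ConnIn (l1Adj N) Z ∧
  (1 - 10 ^ 8 * ε) * (N : ℝ) ^ 2 ≤ (Z.ncard : ℝ) ∧
  ∀ (j : ℕ) (B : Fin j → Set (Torus N)), 0 < j →
    (∀ i, (B i).Nonempty ∧ B i ⊆ Zᶜ ∧ ConnIn (lInfAdj N) (B i)) →
    Pairwise (Function.onFun Disjoint B) →
    ∃ i : Fin j, (setDiam (lInfAdj N) (B i) : ℝ) ≤
      10 ^ 8 / Real.log (1 / ε) * Real.log ((N : ℝ) ^ 2 / (j : ℝ))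

/-- A `2`-dependent site-percolation model on `[N]²`: the state of each cell `C` is
independent of the joint state of all cells at `ℓ₁`-distance at least `3` from `C`. -/
def TwoDependent (N : ℕ) (μ : PMF (Torus N → Bool)) : Prop :=
  ∀ (C : Torus N) (E : Set (Torus N → Bool)),
    (∀ ω ω' : Torus N → Bool,
      (∀ C' : Torus N, ¬ stepsLe (l1Adj N) 2 C C' → ω C' = ω' C') → (ω ∈ E ↔ ω' ∈ E)) →
    ∀ b : Bool,
      μ.toOuterMeasure {ω | ω C = b ∧ ω ∈ E} =
        μ.toOuterMeasure {ω | ω C = b} * μ.toOuterMeasure E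

/-- `B` is a largest `ℓ₁`-component of `Z`. -/
def IsLargestL1Component (N : ℕ) (Z B : Set (Torus N)) : Prop :=
  IsComponentOf (l1Adj N) Z B ∧
    ∀ B' : Set (Torus N), IsComponentOf (l1Adj N) Z B' → B'.ncard ≤ B.ncard

/-- Expectation of a real random variable under a `PMF`. -/
noncomputable def pmfExp {α : Type*} (μ : PMF α) (f : α → ℝ) : ℝ :=
  ∑' a, (μ a).toReal * f a

/-- `N_d`: the number of cells belonging to `ℓ∞`-components of the complement of `G₀`
of `ℓ∞`-diameter exactly `d`. -/
noncomputable def NdCount (N : ℕ) (G₀ : Set (Torus N)) (d : ℕ) : ℕ :=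
  {C : Torus N | ∃ B : Set (Torus N),
    IsComponentOf (lInfAdj N) G₀ᶜ B ∧ C ∈ B ∧ setDiam (lInfAdj N) B = d}.ncard

/-- `N'_d`: the number of cells belonging to `ℓ∞`-components of the complement of `G₀`
of `ℓ∞`-diameter at least `d`. -/
noncomputable def NdGeCount (N : ℕ) (G₀ : Set (Torus N)) (d : ℕ) : ℕ :=
  {C : Torus N | ∃ B : Set (Torus N),
    IsComponentOf (lInfAdj N) G₀ᶜ B ∧ C ∈ B ∧ d ≤ setDiam (lInfAdj N) B}.ncard

/-- A collection of sets of cells `B₁,…,B_s` is stable with respect to the tuple `M` of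
perfect matchings. -/
def StableColl (n t : ℕ) {r s : ℕ} (M : Fin r → Torus n → Torus n)
    (B : Fin s → Set (Cell n t)) : Prop :=
  ∀ j : Fin s, ∃ v : Fin 4 → Torus n, Function.Injective v ∧
    ∀ l : Fin 4, (∃ c ∈ B j, v l ∈ cellSet n t c) ∧
      ∃ i : Fin r, ∃ j' : Fin s, ∃ c ∈ B j', M i (v l) ∈ cellSet n t c

/-- Adjacency in the `m`-dimensional grid `[n]^m` (no wrap-around). -/
def gridAdj (n m : ℕ) (u v : Fin m → Fin n) : Prop :=
  ∃ i : Fin m, ((u i : ℕ) + 1 = (v i : ℕ) ∨ (v i : ℕ) + 1 = (u i : ℕ)) ∧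
    ∀ j : Fin m, j ≠ i → u j = v j

end Maj

open Maj

-- stage 1: basic lemmas, to be inserted before the theorem
section S11
open scoped Classical
open Maj Finset

variable {n k r : ℕ}

abbrev Tup (n r : ℕ) := Fin r → Torus n → Torus n

lemma lAdj_symm {u v : Torus n} (h : LAdj n k u v) : LAdj n k v u := by
  obtain ⟨a, b, ha, hb, rfl⟩ := h
  refine ⟨-a, -b, by simpa using ha, by rcases hb with h | h <;> simp [h], ?_⟩
  push_cast
  apply Prod.ext <;> simp

/-- the ball of `LAdj`-neighbours -/
noncomputable def Lball (n k : ℕ) (w : Torus n) : Finset (Torus n) :=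
  ((Finset.Icc (-(k:ℤ)) (k:ℤ)) ×ˢ ({1, -1} : Finset ℤ)).image
    (fun p => w + (((p.1 : ℤ) : ZMod n), ((p.2 : ℤ) : ZMod n)))

lemma mem_Lball_of_lAdj {w x : Torus n} (h : LAdj n k w x) : x ∈ Lball n k w := by
  obtain ⟨a, b, ha, hb, rfl⟩ := h
  refine Finset.mem_image.2 ⟨(a, b), ?_, rfl⟩
  simp only [Finset.mem_product, Finset.mem_Icc, Finset.mem_insert, Finset.mem_singleton]
  exact ⟨by omega, by tauto⟩

lemma card_Lball_le (w : Torus n) : (Lball n k w).card ≤ 2 * (2 * k + 1) := by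
  refine (Finset.card_image_le).trans ?_
  rw [Finset.card_product, Int.card_Icc]
  rw [Finset.card_pair (by norm_num : (1:ℤ) ≠ -1)]
  omega

def vertsF {n r : ℕ} (F : List (Fin r × Torus n × Torus n)) : Finset (Torus n) :=
  (F.map (fun t => t.2.1)).toFinset ∪ (F.map (fun t => t.2.2)).toFinset

lemma mem_vertsF_fst {F : List (Fin r × Torus n × Torus n)} {t} (ht : t ∈ F) :
    t.2.1 ∈ vertsF F := by
  simp only [vertsF, Finset.mem_union, List.mem_toFinset, List.mem_map]
  exact Or.inl ⟨t, ht, rfl⟩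

lemma mem_vertsF_snd {F : List (Fin r × Torus n × Torus n)} {t} (ht : t ∈ F) :
    t.2.2 ∈ vertsF F := by
  simp only [vertsF, Finset.mem_union, List.mem_toFinset, List.mem_map]
  exact Or.inr ⟨t, ht, rfl⟩

lemma card_vertsF_le (F : List (Fin r × Torus n × Torus n)) :
    (vertsF F).card ≤ 2 * F.length := by
  refine (Finset.card_union_le _ _).trans ?_
  have h1 := (F.map (fun t => t.2.1)).toFinset_card_le
  have h2 := (F.map (fun t => t.2.2)).toFinset_card_le
  simp only [List.length_map] at h1 h2
  omega

lemma vertsF_cons (t : Fin r × Torus n × Torus n) (F : List (Fin r × Torus n × Torus n)) :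
    vertsF (t :: F) = insert t.2.1 (insert t.2.2 (vertsF F)) := by
  simp [vertsF, List.toFinset_cons, Finset.insert_union, Finset.union_insert]
  exact Finset.insert_comm _ _ _

lemma torus_card (n : ℕ) [NeZero n] : Fintype.card (Torus n) = n ^ 2 := by
  simp [ZMod.card, sq]

end S11

section S11b
open scoped Classical
open Maj Finset

variable {n k r : ℕ}

/-- double swap: replaces the matching edges {v, f v}, {x, f x} by {v, x}, {f v, f x}. -/
def dswap {n : ℕ} (f : Torus n → Torus n) (v x : Torus n) : Torus n → Torus n :=
  fun u => if u = v then x else if u = x then v else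
    if u = f v then f x else if u = f x then f v else f u

section dswapLemmas
variable {f : Torus n → Torus n} {v x : Torus n}

lemma dswap_v : dswap f v x v = x := by simp [dswap]

lemma dswap_x (h : x ≠ v) : dswap f v x x = v := by simp [dswap, h]

lemma dswap_fv (h1 : f v ≠ v) (h2 : f v ≠ x) : dswap f v x (f v) = f x := by
  simp [dswap, h1, h2]

lemma dswap_fx (h1 : f x ≠ v) (h2 : f x ≠ x) (h3 : f x ≠ f v) :
    dswap f v x (f x) = f v := by simp [dswap, h1, h2, h3]

lemma dswap_other {u : Torus n} (h1 : u ≠ v) (h2 : u ≠ x) (h3 : u ≠ f v) (h4 : u ≠ f x) :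
    dswap f v x u = f u := by simp [dswap, h1, h2, h3, h4]

variable (hf : Function.Involutive f) (hfp : ∀ u, f u ≠ u) (hxv : x ≠ v) (hxz : x ≠ f v)

include hf hfp hxv hxz

lemma dswap_distinct : f x ≠ v ∧ f x ≠ x ∧ f x ≠ f v ∧ f v ≠ v := by
  refine ⟨fun h => hxz (by rw [← h, hf x]), hfp x, fun h => hxv (hf.injective h), hfp v⟩

lemma dswap_involutive : Function.Involutive (dswap f v x) := by
  obtain ⟨h1, h2, h3, h4⟩ := dswap_distinct hf hfp hxv hxz
  intro u
  by_cases hv : u = v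
  · subst hv; rw [dswap_v, dswap_x hxv]
  by_cases hx : u = x
  · subst hx; rw [dswap_x hxv, dswap_v]
  by_cases hz : u = f v
  · subst hz; rw [dswap_fv h4 (fun h => hxz h.symm), dswap_fx h1 h2 h3]
  by_cases hy : u = f x
  · subst hy; rw [dswap_fx h1 h2 h3, dswap_fv h4 (fun h => hxz h.symm)]
  · rw [dswap_other hv hx hz hy]
    have g1 : f u ≠ v := fun h => hz (by rw [← h, hf u])
    have g2 : f u ≠ x := fun h => hy (by rw [← h, hf u])
    have g3 : f u ≠ f v := fun h => hv (hf.injective h)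
    have g4 : f u ≠ f x := fun h => hx (hf.injective h)
    rw [dswap_other g1 g2 g3 g4, hf u]

lemma dswap_fpf : ∀ u, dswap f v x u ≠ u := by
  obtain ⟨h1, h2, h3, h4⟩ := dswap_distinct hf hfp hxv hxz
  intro u
  by_cases hv : u = v
  · subst hv; rw [dswap_v]; exact hxv
  by_cases hx : u = x
  · subst hx; rw [dswap_x hxv]; exact fun h => hxv h.symm
  by_cases hz : u = f v
  · subst hz; rw [dswap_fv h4 (fun h => hxz h.symm)]; exact h3
  by_cases hy : u = f x
  · subst hy; rw [dswap_fx h1 h2 h3]; exact fun h => h3 h.symm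
  · rw [dswap_other hv hx hz hy]; exact hfp u

end dswapLemmas

/-- the tuple with matching `i` double-swapped -/
def switchT {n r : ℕ} (M : Tup n r) (i : Fin r) (v x : Torus n) : Tup n r :=
  fun j => if j = i then dswap (M i) v x else M j

noncomputable def AF (n k r : ℕ) [NeZero n] (F : List (Fin r × Torus n × Torus n)) :
    Finset (Tup n r) :=
  Finset.univ.filter (fun M => Admissible n k M ∧ ∀ t ∈ F, M t.1 t.2.1 = t.2.2)

lemma mem_AF [NeZero n] {F : List (Fin r × Torus n × Torus n)} {M : Tup n r} :
    M ∈ AF n k r F ↔ Admissible n k M ∧ ∀ t ∈ F, M t.1 t.2.1 = t.2.2 := by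
  simp [AF]

/-- the set of vertices unusable as switching partners -/
noncomputable def badSet (k : ℕ) (M : Tup n r) (i : Fin r) (v z : Torus n)
    (F : List (Fin r × Torus n × Torus n)) : Finset (Torus n) :=
  {v, z, M i z} ∪ Finset.image (fun j => M j v) Finset.univ ∪
    Finset.image (fun j => M i (M j z)) Finset.univ ∪ Lball n k v ∪
    (Lball n k z).image (M i) ∪ vertsF F ∪ (vertsF F).image (M i)

lemma card_badSet_le (M : Tup n r) (i : Fin r) (v z : Torus n)
    (F : List (Fin r × Torus n × Torus n)) :
    (badSet k M i v z F).card ≤ 2 * r + 8 * k + 7 + 4 * F.length := by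
  have c1 : ({v, z, M i z} : Finset (Torus n)).card ≤ 3 :=
    (Finset.card_insert_le _ _).trans (by
      have := Finset.card_insert_le z ({M i z} : Finset (Torus n)); simp at this ⊢; omega)
  have c2 : (Finset.image (fun j => M j v) (Finset.univ : Finset (Fin r))).card ≤ r :=
    Finset.card_image_le.trans (by simp)
  have c3 : (Finset.image (fun j => M i (M j z)) (Finset.univ : Finset (Fin r))).card ≤ r :=
    Finset.card_image_le.trans (by simp)
  have c4 : (Lball n k v).card ≤ 2 * (2 * k + 1) := card_Lball_le v
  have c5 : ((Lball n k z).image (M i)).card ≤ 2 * (2 * k + 1) :=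
    Finset.card_image_le.trans (card_Lball_le z)
  have c6 : (vertsF F).card ≤ 2 * F.length := card_vertsF_le F
  have c7 : ((vertsF F).image (M i)).card ≤ 2 * F.length :=
    Finset.card_image_le.trans (card_vertsF_le F)
  have u1 := Finset.card_union_le
    ({v, z, M i z} ∪ Finset.image (fun j => M j v) Finset.univ ∪
      Finset.image (fun j => M i (M j z)) Finset.univ ∪ Lball n k v ∪
      (Lball n k z).image (M i) ∪ vertsF F) ((vertsF F).image (M i))
  have u2 := Finset.card_union_le
    ({v, z, M i z} ∪ Finset.image (fun j => M j v) Finset.univ ∪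
      Finset.image (fun j => M i (M j z)) Finset.univ ∪ Lball n k v ∪
      (Lball n k z).image (M i)) (vertsF F)
  have u3 := Finset.card_union_le
    ({v, z, M i z} ∪ Finset.image (fun j => M j v) Finset.univ ∪
      Finset.image (fun j => M i (M j z)) Finset.univ ∪ Lball n k v)
    ((Lball n k z).image (M i))
  have u4 := Finset.card_union_le
    ({v, z, M i z} ∪ Finset.image (fun j => M j v) Finset.univ ∪
      Finset.image (fun j => M i (M j z)) Finset.univ) (Lball n k v)
  have u5 := Finset.card_union_le
    ({v, z, M i z} ∪ Finset.image (fun j => M j v) Finset.univ)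
    (Finset.image (fun j => M i (M j z)) Finset.univ)
  have u6 := Finset.card_union_le ({v, z, M i z} : Finset (Torus n))
    (Finset.image (fun j => M j v) Finset.univ)
  unfold badSet
  omega

end S11b

section S11c
open scoped Classical
open Maj Finset

variable {n k r : ℕ}

lemma switch_mem [NeZero n] {F : List (Fin r × Torus n × Torus n)} {i : Fin r}
    {v z : Torus n}
    (hz : ¬ ∃ t ∈ F, t.1 = i ∧ (t.2.1 = z ∨ t.2.2 = z))
    (hv : v ∉ vertsF F)
    {M : Tup n r} (hM : Admissible n k M) (hF : ∀ t ∈ F, M t.1 t.2.1 = t.2.2)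
    (hMv : M i v = z) {x : Torus n} (hx : x ∉ badSet k M i v z F) :
    switchT M i v x ∈ AF n k r F := by
  simp only [badSet, Finset.mem_union, not_or] at hx
  obtain ⟨⟨⟨⟨⟨⟨hxA, hxB⟩, hxC⟩, hxD⟩, hxE⟩, hxF⟩, hxG⟩ := hx
  have hx1 : x ≠ v := by intro h; exact hxA (by simp [h])
  have hx2 : x ≠ z := by intro h; exact hxA (by simp [h])
  have hx4 : ∀ j, x ≠ M j v := fun j h => hxB (Finset.mem_image.2 ⟨j, Finset.mem_univ j, h.symm⟩)
  have hx5 : ∀ j, x ≠ M i (M j z) :=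
    fun j h => hxC (Finset.mem_image.2 ⟨j, Finset.mem_univ j, h.symm⟩)
  have hx7 : ∀ u ∈ Lball n k z, x ≠ M i u :=
    fun u hu h => hxE (Finset.mem_image.2 ⟨u, hu, h.symm⟩)
  have hx9 : ∀ u ∈ vertsF F, x ≠ M i u :=
    fun u hu h => hxG (Finset.mem_image.2 ⟨u, hu, h.symm⟩)
  set f := M i with hf_def
  have hfI : Function.Involutive f := (hM.1 i).1
  have hfp : ∀ u, f u ≠ u := (hM.1 i).2
  have hxz' : x ≠ f v := by rw [hMv]; exact hx2
  obtain ⟨hyv, hyx, hyz, hzv⟩ := dswap_distinct hfI hfp hx1 hxz'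
  have hside : ∀ j', j' ≠ i → ∀ u, dswap f v x u ≠ M j' u := by
    intro j' hj' u
    have hj'I : Function.Involutive (M j') := (hM.1 j').1
    by_cases h1 : u = v
    · rw [h1, dswap_v]; exact hx4 j'
    by_cases h2 : u = x
    · rw [h2, dswap_x hx1]
      intro h; exact hx4 j' (by rw [h, hj'I x])
    by_cases h3 : u = f v
    · rw [h3, dswap_fv hzv (fun h => hxz' h.symm), hMv]
      intro h
      exact hx5 j' (by rw [← h, hfI x])
    by_cases h4 : u = f x
    · rw [h4, dswap_fx hyv hyx hyz, hMv]
      intro h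
      have hh : M j' z = f x := by rw [h]; exact hj'I (f x)
      exact hx5 j' (by rw [hh, hfI x])
    · rw [dswap_other h1 h2 h3 h4]
      exact hM.2.1 i j' (fun h => hj' h.symm) u
  have hLi : ∀ u, ¬ LAdj n k u (dswap f v x u) := by
    intro u
    by_cases h1 : u = v
    · rw [h1, dswap_v]; intro h; exact hxD (mem_Lball_of_lAdj h)
    by_cases h2 : u = x
    · rw [h2, dswap_x hx1]; intro h; exact hxD (mem_Lball_of_lAdj (lAdj_symm h))
    by_cases h3 : u = f v
    · rw [h3, dswap_fv hzv (fun h => hxz' h.symm)]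
      intro h
      rw [hMv] at h
      exact hx7 (f x) (mem_Lball_of_lAdj h) (hfI x).symm
    by_cases h4 : u = f x
    · rw [h4, dswap_fx hyv hyx hyz]
      intro h
      rw [hMv] at h
      exact hx7 (f x) (mem_Lball_of_lAdj (lAdj_symm h)) (hfI x).symm
    · rw [dswap_other h1 h2 h3 h4]; exact hM.2.2 i u
  have hResp : ∀ t ∈ F, switchT M i v x t.1 t.2.1 = t.2.2 := by
    intro t ht
    by_cases hti : t.1 = i
    · simp only [switchT, if_pos hti]
      have w1 : t.2.1 ≠ v := fun h => hv (h ▸ mem_vertsF_fst ht)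
      have w2 : t.2.1 ≠ x := fun h => hxF (h ▸ mem_vertsF_fst ht)
      have w3 : t.2.1 ≠ f v := by rw [hMv]; intro h; exact hz ⟨t, ht, hti, Or.inl h⟩
      have w4 : t.2.1 ≠ f x := by
        intro h
        exact hx9 t.2.1 (mem_vertsF_fst ht) (by rw [h, hfI x])
      rw [dswap_other w1 w2 w3 w4, hf_def, ← hti]
      exact hF t ht
    · simp only [switchT, if_neg hti]; exact hF t ht
  rw [mem_AF]
  refine ⟨⟨?_, ?_, ?_⟩, hResp⟩
  · intro j
    by_cases hj : j = i
    · subst hj; simp only [switchT, if_pos rfl]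
      exact ⟨dswap_involutive hfI hfp hx1 hxz', dswap_fpf hfI hfp hx1 hxz'⟩
    · simp only [switchT, if_neg hj]; exact hM.1 j
  · intro j j' hjj' u
    simp only [switchT]
    by_cases hj : j = i <;> by_cases hj' : j' = i
    · exact absurd (hj.trans hj'.symm) hjj'
    · subst hj; rw [if_pos rfl, if_neg hj']
      exact hside j' hj' u
    · subst hj'; rw [if_neg hj, if_pos rfl]
      exact fun h => hside j hj u h.symm
    · rw [if_neg hj, if_neg hj']; exact hM.2.1 j j' hjj' u
  · intro j u
    simp only [switchT]
    by_cases hj : j = i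
    · subst hj; rw [if_pos rfl]; exact hLi u
    · rw [if_neg hj]; exact hM.2.2 j u

lemma key_switch [NeZero n] (F : List (Fin r × Torus n × Torus n)) (i : Fin r) (v z : Torus n)
    (hn2 : 2 * (2 * r + 8 * k + 7 + 4 * F.length) ≤ n ^ 2)
    (hv : v ∉ vertsF F) :
    (AF n k r ((i, v, z) :: F)).card * n ^ 2 ≤ 2 * (AF n k r F).card := by
  by_cases hz : ∃ t ∈ F, t.1 = i ∧ (t.2.1 = z ∨ t.2.2 = z)
  · have hempty : AF n k r ((i, v, z) :: F) = ∅ := by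
      rw [Finset.eq_empty_iff_forall_notMem]
      intro M hM
      rw [mem_AF] at hM
      obtain ⟨hAdm, hresp⟩ := hM
      have hMv : M i v = z := hresp (i, v, z) List.mem_cons_self
      obtain ⟨t, ht, hti, hc⟩ := hz
      have hMt : M i t.2.1 = t.2.2 := by rw [← hti]; exact hresp t (List.mem_cons_of_mem _ ht)
      have hI : Function.Involutive (M i) := (hAdm.1 i).1
      rcases hc with h | h
      · apply hv
        have hvv : v = t.2.2 := by rw [← hMt, h, ← hMv, hI v]
        rw [hvv]; exact mem_vertsF_snd ht
      · apply hv
        have hvv : v = t.2.1 := hI.injective (by rw [hMt, hMv, h])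
        rw [hvv]; exact mem_vertsF_fst ht
    simp [hempty]
  · set T := AF n k r ((i, v, z) :: F) with hT
    have hTmem : ∀ M ∈ T, Admissible n k M ∧ (∀ t ∈ F, M t.1 t.2.1 = t.2.2) ∧ M i v = z := by
      intro M hM
      rw [hT, mem_AF] at hM
      exact ⟨hM.1, fun t ht => hM.2 t (List.mem_cons_of_mem _ ht),
        hM.2 (i, v, z) List.mem_cons_self⟩
    have hcard : ∀ M ∈ T, n ^ 2 ≤ 2 * ((Finset.univ \ badSet k M i v z F).card) := by
      intro M _
      have h1 : (badSet k M i v z F).card ≤ 2 * r + 8 * k + 7 + 4 * F.length :=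
        card_badSet_le M i v z F
      have h2 : (Finset.univ \ badSet k M i v z F).card
          = n ^ 2 - (badSet k M i v z F).card := by
        rw [Finset.card_sdiff_of_subset (Finset.subset_univ _), Finset.card_univ, torus_card]
      have h3 : (badSet k M i v z F).card ≤ n ^ 2 := by
        have := Finset.card_le_univ (badSet k M i v z F)
        rwa [torus_card] at this
      omega
    calc T.card * n ^ 2 = ∑ _M ∈ T, n ^ 2 := by rw [Finset.sum_const, smul_eq_mul, mul_comm]
      _ ≤ ∑ M ∈ T, 2 * ((Finset.univ \ badSet k M i v z F).card) := Finset.sum_le_sum hcard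
      _ = 2 * ∑ M ∈ T, ((Finset.univ \ badSet k M i v z F).card) := by rw [Finset.mul_sum]
      _ = 2 * (T.sigma (fun M => Finset.univ \ badSet k M i v z F)).card := by
          rw [Finset.card_sigma]
      _ ≤ 2 * (AF n k r F).card := ?_
    refine Nat.mul_le_mul_left 2 ?_
    refine Finset.card_le_card_of_injOn (fun p => switchT p.1 i v p.2) ?_ ?_
    · intro p hp
      rw [Finset.mem_coe, Finset.mem_sigma] at hp
      obtain ⟨hAdm, hresp, hMv⟩ := hTmem p.1 hp.1
      have hx : p.2 ∉ badSet k p.1 i v z F := (Finset.mem_sdiff.1 hp.2).2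
      exact switch_mem hz hv hAdm hresp hMv hx
    · rintro ⟨M₁, x₁⟩ hp ⟨M₂, x₂⟩ hq heq
      simp only [Finset.coe_sigma, Set.mem_sigma_iff, Finset.mem_coe] at hp hq
      obtain ⟨hA1, hr1, hv1⟩ := hTmem M₁ hp.1
      obtain ⟨hA2, hr2, hv2⟩ := hTmem M₂ hq.1
      have hb1 : x₁ ∉ badSet k M₁ i v z F := (Finset.mem_sdiff.1 hp.2).2
      have hb2 : x₂ ∉ badSet k M₂ i v z F := (Finset.mem_sdiff.1 hq.2).2
      have hI1 : Function.Involutive (M₁ i) := (hA1.1 i).1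
      have hI2 : Function.Involutive (M₂ i) := (hA2.1 i).1
      have hq1 : ∀ u, M₁ i u ≠ u := (hA1.1 i).2
      have hq2 : ∀ u, M₂ i u ≠ u := (hA2.1 i).2
      have e1 : x₁ ≠ v := fun h => hb1 (by rw [h]; simp [badSet])
      have e2 : x₁ ≠ z := fun h => hb1 (by rw [h]; simp [badSet])
      have hxeq : x₁ = x₂ := by
        have h1 := congrFun (congrFun heq i) v
        simp only [switchT, eq_self_iff_true, if_true] at h1
        rwa [dswap_v, dswap_v] at h1
      subst hxeq
      have f1 : x₁ ≠ v := e1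
      have e2' : x₁ ≠ M₁ i v := by rw [hv1]; exact e2
      have f2' : x₁ ≠ M₂ i v := by rw [hv2]; exact e2
      obtain ⟨g1, g2, g3, g4⟩ := dswap_distinct hI1 hq1 e1 e2'
      obtain ⟨g1', g2', g3', g4'⟩ := dswap_distinct hI2 hq2 f1 f2'
      have hyeq : M₁ i x₁ = M₂ i x₁ := by
        have h1 := congrFun (congrFun heq i) z
        simp only [switchT, eq_self_iff_true, if_true] at h1
        have l1 : dswap (M₁ i) v x₁ z = M₁ i x₁ := by
          rw [← hv1]; exact dswap_fv g4 (fun h => e2' h.symm)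
        have l2 : dswap (M₂ i) v x₁ z = M₂ i x₁ := by
          rw [← hv2]; exact dswap_fv g4' (fun h => f2' h.symm)
        rw [l1, l2] at h1; exact h1
      have hMeq : M₁ = M₂ := by
        funext j u
        have hju := congrFun (congrFun heq j) u
        by_cases hj : j = i
        · rw [hj]
          rw [hj] at hju
          simp only [switchT, eq_self_iff_true, if_true] at hju
          by_cases c1 : u = v
          · rw [c1, hv1, hv2]
          by_cases c2 : u = z
          · have l1 : M₁ i z = v := by rw [← hv1, hI1 v]
            have l2 : M₂ i z = v := by rw [← hv2, hI2 v]
            rw [c2, l1, l2]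
          by_cases c3 : u = x₁
          · rw [c3]; exact hyeq
          by_cases c4 : u = M₁ i x₁
          · rw [c4, hI1 x₁, hyeq, hI2 x₁]
          · have d1 : dswap (M₁ i) v x₁ u = M₁ i u :=
              dswap_other c1 c3 (by rw [hv1]; exact c2) c4
            have d2 : dswap (M₂ i) v x₁ u = M₂ i u :=
              dswap_other c1 c3 (by rw [hv2]; exact c2) (by rw [← hyeq]; exact c4)
            rw [← d1, ← d2]; exact hju
        · simp only [switchT, if_neg hj] at hju; exact hju
      subst hMeq
      rfl

end S11c

section S11d
open scoped Classical
open Maj Finset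

variable {n k r : ℕ}

lemma peel [NeZero n] (Z : Finset (Torus n)) (s : ℕ)
    (hn2 : 2 * (2 * r + 8 * k + 7 + 4 * (2 * s)) ≤ n ^ 2) :
    ∀ (j : ℕ) (F : List (Fin r × Torus n × Torus n)) (S' : Finset (Torus n)),
      S' ⊆ Z → 2 * j ≤ S'.card → F.length + j ≤ 2 * s → (∀ w ∈ vertsF F, w ∉ S') →
      ((AF n k r F).filter (fun M => ∀ v ∈ S', ∃ i, M i v ∈ Z)).card * (n ^ 2) ^ j
        ≤ (2 * (r * Z.card)) ^ j * (AF n k r F).card := by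
  intro j
  induction j with
  | zero =>
    intro F S' _ _ _ _
    simpa using Finset.card_le_card (Finset.filter_subset _ _)
  | succ j ih =>
    intro F S' hS'Z hScard hlen hdisj
    obtain ⟨v, hvS'⟩ : S'.Nonempty := Finset.card_pos.1 (by omega)
    have hsub : (AF n k r F).filter (fun M => ∀ u ∈ S', ∃ i, M i u ∈ Z) ⊆
        (Finset.univ ×ˢ Z).biUnion (fun p =>
          (AF n k r ((p.1, v, p.2) :: F)).filter
            (fun M => ∀ u ∈ (S'.erase v).erase p.2, ∃ i, M i u ∈ Z)) := by
      intro M hM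
      rw [Finset.mem_filter] at hM
      obtain ⟨hMA, hEv⟩ := hM
      obtain ⟨i0, hz0⟩ := hEv v hvS'
      refine Finset.mem_biUnion.2 ⟨(i0, M i0 v),
        Finset.mem_product.2 ⟨Finset.mem_univ _, hz0⟩, ?_⟩
      rw [Finset.mem_filter]
      constructor
      · rw [mem_AF] at hMA ⊢
        refine ⟨hMA.1, ?_⟩
        intro t ht
        rcases List.mem_cons.1 ht with h | h
        · rw [h]
        · exact hMA.2 t h
      · intro u hu
        exact hEv u (Finset.mem_of_mem_erase (Finset.mem_of_mem_erase hu))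
    have hbound : ∀ p ∈ (Finset.univ : Finset (Fin r)) ×ˢ Z,
        ((AF n k r ((p.1, v, p.2) :: F)).filter
          (fun M => ∀ u ∈ (S'.erase v).erase p.2, ∃ i, M i u ∈ Z)).card * (n ^ 2) ^ (j + 1)
        ≤ (2 * (r * Z.card)) ^ j * (2 * (AF n k r F).card) := by
      intro p _
      have hkey : (AF n k r ((p.1, v, p.2) :: F)).card * n ^ 2
          ≤ 2 * (AF n k r F).card := by
        have hL : 2 * (2 * r + 8 * k + 7 + 4 * F.length)
            ≤ 2 * (2 * r + 8 * k + 7 + 4 * (2 * s)) := by omega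
        have hv' : v ∉ vertsF F := fun h => hdisj v h hvS'
        exact key_switch F p.1 v p.2 (le_trans hL hn2) hv'
      have hih := ih ((p.1, v, p.2) :: F) ((S'.erase v).erase p.2)
        (fun u hu => hS'Z (Finset.mem_of_mem_erase (Finset.mem_of_mem_erase hu)))
        (by
          have a1 := Finset.pred_card_le_card_erase (s := S') (a := v)
          have a2 := Finset.pred_card_le_card_erase (s := S'.erase v) (a := p.2)
          omega)
        (by simp only [List.length_cons]; omega)
        (by
          intro w hw
          rw [vertsF_cons] at hw
          simp only [Finset.mem_insert] at hw
          rcases hw with h | h | h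
          · rw [h]
            exact fun hc => (Finset.notMem_erase v _) (Finset.mem_of_mem_erase hc)
          · rw [h]; exact Finset.notMem_erase _ _
          · exact fun hc => hdisj w h
              (Finset.mem_of_mem_erase (Finset.mem_of_mem_erase hc)))
      calc ((AF n k r ((p.1, v, p.2) :: F)).filter
            (fun M => ∀ u ∈ (S'.erase v).erase p.2, ∃ i, M i u ∈ Z)).card * (n ^ 2) ^ (j + 1)
          = (((AF n k r ((p.1, v, p.2) :: F)).filter
            (fun M => ∀ u ∈ (S'.erase v).erase p.2, ∃ i, M i u ∈ Z)).card * (n ^ 2) ^ j) * n ^ 2 := by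
            rw [pow_succ, mul_assoc]
        _ ≤ ((2 * (r * Z.card)) ^ j * (AF n k r ((p.1, v, p.2) :: F)).card) * n ^ 2 :=
            Nat.mul_le_mul_right _ hih
        _ = (2 * (r * Z.card)) ^ j * ((AF n k r ((p.1, v, p.2) :: F)).card * n ^ 2) := by
            rw [mul_assoc]
        _ ≤ (2 * (r * Z.card)) ^ j * (2 * (AF n k r F).card) :=
            Nat.mul_le_mul_left _ hkey
    calc ((AF n k r F).filter (fun M => ∀ u ∈ S', ∃ i, M i u ∈ Z)).card * (n ^ 2) ^ (j + 1)
        ≤ ((Finset.univ ×ˢ Z).biUnion (fun p =>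
            (AF n k r ((p.1, v, p.2) :: F)).filter
              (fun M => ∀ u ∈ (S'.erase v).erase p.2, ∃ i, M i u ∈ Z))).card * (n ^ 2) ^ (j + 1) :=
          Nat.mul_le_mul_right _ (Finset.card_le_card hsub)
      _ ≤ (∑ p ∈ (Finset.univ : Finset (Fin r)) ×ˢ Z,
            ((AF n k r ((p.1, v, p.2) :: F)).filter
              (fun M => ∀ u ∈ (S'.erase v).erase p.2, ∃ i, M i u ∈ Z)).card) * (n ^ 2) ^ (j + 1) :=
          Nat.mul_le_mul_right _ Finset.card_biUnion_le
      _ = ∑ p ∈ (Finset.univ : Finset (Fin r)) ×ˢ Z,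
            ((AF n k r ((p.1, v, p.2) :: F)).filter
              (fun M => ∀ u ∈ (S'.erase v).erase p.2, ∃ i, M i u ∈ Z)).card * (n ^ 2) ^ (j + 1) :=
          Finset.sum_mul _ _ _
      _ ≤ ∑ _p ∈ (Finset.univ : Finset (Fin r)) ×ˢ Z,
            (2 * (r * Z.card)) ^ j * (2 * (AF n k r F).card) :=
          Finset.sum_le_sum hbound
      _ = (r * Z.card) * ((2 * (r * Z.card)) ^ j * (2 * (AF n k r F).card)) := by
          rw [Finset.sum_const, Finset.card_product, Finset.card_univ, Fintype.card_fin,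
            smul_eq_mul]
      _ = (2 * (r * Z.card)) ^ (j + 1) * (AF n k r F).card := by ring

end S11d


/-- Lemma 4.1 of the paper, the switching lemma. For `S ⊆ Z ⊆ [n]²` with
`|S| = 4s`, `|Z| = z`, `z + 2(4k+r+2)²(4rs) ≤ n²/2` and `4erz ≤ n²/2`, the probability that
a uniformly random `k`-admissible `r`-tuple of perfect matchings matches every vertex of `S`
to a vertex of `Z` is at most `(16rz/n²)^{2s}`. -/
theorem statement_11 (n k r s : ℕ) (hn : Even n) (hs : 1 ≤ s)
    (S Z : Finset (Torus n)) (hSZ : S ⊆ Z) (hScard : S.card = 4 * s)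
    (h1 : (Z.card : ℝ) + 2 * (4 * (k : ℝ) + r + 2) ^ 2 * (4 * r * s) ≤ (n : ℝ) ^ 2 / 2)
    (h2 : 4 * Real.exp 1 * r * (Z.card : ℝ) ≤ (n : ℝ) ^ 2 / 2) :
    admProb n k r (fun M => ∀ v ∈ S, ∃ i : Fin r, M i v ∈ Z) ≤
      (16 * (r : ℝ) * (Z.card : ℝ) / (n : ℝ) ^ 2) ^ (2 * s) := by
  classical
  rcases Nat.eq_zero_or_pos r with hr0 | hrpos
  · subst hr0
    obtain ⟨v0, hv0⟩ : S.Nonempty := Finset.card_pos.1 (by omega)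
    haveI : IsEmpty {M : Fin 0 → Torus n → Torus n // Admissible n k M ∧
        ∀ v ∈ S, ∃ i : Fin 0, M i v ∈ Z} :=
      ⟨fun M => by obtain ⟨i, _⟩ := M.2.2 v0 hv0; exact i.elim0⟩
    unfold admProb
    rw [Nat.card_of_isEmpty]
    simp only [Nat.cast_zero, zero_div]
    positivity
  · have hrR : (1 : ℝ) ≤ (r : ℝ) := by exact_mod_cast hrpos
    have hsR : (1 : ℝ) ≤ (s : ℝ) := by exact_mod_cast hs
    have hkR : (0 : ℝ) ≤ (k : ℝ) := Nat.cast_nonneg k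
    have hzR : (0 : ℝ) ≤ (Z.card : ℝ) := Nat.cast_nonneg _
    have hQ3 : (3 : ℝ) ≤ 4 * (k : ℝ) + r + 2 := by linarith
    have hQ2 : (9 : ℝ) ≤ (4 * (k : ℝ) + r + 2) ^ 2 := by nlinarith
    have hbc : (1 : ℝ) ≤ (r : ℝ) * s := by nlinarith
    have hnn : n ≠ 0 := by
      rintro rfl
      simp only [Nat.cast_zero] at h1
      have h72 : (9 : ℝ) * 1 ≤ (4 * (k : ℝ) + r + 2) ^ 2 * ((r : ℝ) * s) :=
        mul_le_mul hQ2 hbc zero_le_one (by positivity)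
      nlinarith
    haveI : NeZero n := ⟨hnn⟩
    have hA : 16 * (4 * (k : ℝ) + r + 2) ^ 2 * ((r : ℝ) * s) ≤ (n : ℝ) ^ 2 := by
      nlinarith [h1, hzR]
    have hB : (4 * (r : ℝ) + 16 * k + 14 + 16 * s)
        ≤ 16 * (4 * (k : ℝ) + r + 2) ^ 2 * ((r : ℝ) * s) := by
      nlinarith [mul_nonneg hkR (sub_nonneg.2 hbc),
        mul_nonneg (sub_nonneg.2 hrR) (sub_nonneg.2 hsR),
        mul_nonneg (mul_nonneg hkR hkR) (by positivity : (0 : ℝ) ≤ (r : ℝ) * s),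
        mul_nonneg hkR (by positivity : (0 : ℝ) ≤ (r : ℝ) * s),
        mul_nonneg (sub_nonneg.2 hrR) hzR, sq_nonneg (4 * (k : ℝ) + r + 2),
        mul_nonneg (sub_nonneg.2 hbc) (by positivity : (0 : ℝ) ≤ (4 * (k : ℝ) + r + 2) ^ 2), hQ2, hbc, hrR, hsR, hkR]
    have hn2 : 2 * (2 * r + 8 * k + 7 + 4 * (2 * s)) ≤ n ^ 2 := by
      have hreal : (2 * (2 * (r : ℝ) + 8 * k + 7 + 4 * (2 * s))) ≤ (n : ℝ) ^ 2 := by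
        linarith
      exact_mod_cast hreal
    have hmain := peel (n := n) (k := k) (r := r) Z s hn2 (2 * s) [] S hSZ
      (by omega) (by simp) (by simp [vertsF])
    have hden : Nat.card {M : Fin r → Torus n → Torus n // Admissible n k M}
        = (AF n k r []).card := by
      rw [Nat.card_eq_fintype_card, Fintype.card_subtype]
      congr 1
      ext M
      simp [AF]
    have hnum : Nat.card {M : Fin r → Torus n → Torus n // Admissible n k M ∧
          ∀ v ∈ S, ∃ i : Fin r, M i v ∈ Z}
        = ((AF n k r []).filter (fun M => ∀ v ∈ S, ∃ i, M i v ∈ Z)).card := by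
      rw [Nat.card_eq_fintype_card, Fintype.card_subtype]
      congr 1
      ext M
      simp [AF, Finset.mem_filter]
    unfold admProb
    rw [hnum, hden]
    by_cases ha : (AF n k r []).card = 0
    · have hb : ((AF n k r []).filter (fun M => ∀ v ∈ S, ∃ i, M i v ∈ Z)).card = 0 := by
        have hle := Finset.card_le_card (Finset.filter_subset
          (fun M => ∀ v ∈ S, ∃ i, M i v ∈ Z) (AF n k r []))
        rw [ha] at hle
        exact Nat.le_zero.mp hle
      rw [hb, ha]
      simp only [Nat.cast_zero, zero_div]
      positivity
    · have haR : (0 : ℝ) < ((AF n k r []).card : ℝ) :=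
        Nat.cast_pos.2 (Nat.pos_of_ne_zero ha)
      have hnR : (0 : ℝ) < (n : ℝ) := by exact_mod_cast Nat.pos_of_ne_zero hnn
      have hnpos : (0 : ℝ) < ((n : ℝ) ^ 2) ^ (2 * s) := by positivity
      have step1 : (((AF n k r []).filter (fun M => ∀ v ∈ S, ∃ i, M i v ∈ Z)).card : ℝ)
            / ((AF n k r []).card : ℝ)
          ≤ (2 * ((r : ℝ) * Z.card)) ^ (2 * s) / ((n : ℝ) ^ 2) ^ (2 * s) := by
        rw [div_le_div_iff₀ haR hnpos]
        calc (((AF n k r []).filter (fun M => ∀ v ∈ S, ∃ i, M i v ∈ Z)).card : ℝ)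
              * ((n : ℝ) ^ 2) ^ (2 * s)
            = ((((AF n k r []).filter (fun M => ∀ v ∈ S, ∃ i, M i v ∈ Z)).card
              * (n ^ 2) ^ (2 * s) : ℕ) : ℝ) := by push_cast; ring
          _ ≤ (((2 * (r * Z.card)) ^ (2 * s) * (AF n k r []).card : ℕ) : ℝ) := by
              exact_mod_cast hmain
          _ = (2 * ((r : ℝ) * Z.card)) ^ (2 * s) * ((AF n k r []).card : ℝ) := by
              push_cast; ring
      refine step1.trans ?_
      rw [← div_pow]
      refine pow_le_pow_left₀ (by positivity) ?_ (2 * s)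
      rw [div_le_div_iff₀ (by positivity) (by positivity)]
      have hmono : (0 : ℝ) ≤ (r : ℝ) * Z.card * (n : ℝ) ^ 2 := by positivity
      linarith
end

section
/- Fix an integer m ≥ 2 and a constant p ∈ [0,1). Consider the strict majority bootstrap percolation process M₁([n]^m; p) on the m-dimensional grid graph [n]^m, where each vertex is initially active with probability p independently. Then, with probability tending to 1 as n → ∞, the process does not disseminate. In particular, the critical probability for dissemination of M₁([n]^m; p) equals 1. (The key deterministic fact is: if all 2^m vertices of a translate of the cube {1,2}^m inside [n]^m are initially inactive, then they all remain inactive in the final state.) -/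
open Finset Filter

open Maj

section Det

variable {n m : ℕ}

lemma grid_deg_le (v : Fin m → Fin n) : (nbrSet (gridAdj n m) v).ncard ≤ 2 * m := by
  classical
  rcases Set.eq_empty_or_nonempty (nbrSet (gridAdj n m) v) with he | ⟨u0, hu0⟩
  · simp [he]
  obtain ⟨i0, -⟩ := hu0
  have hcard : (Set.univ : Set (Fin m × Bool)).ncard = 2 * m := by
    rw [Set.ncard_univ, Nat.card_eq_fintype_card]
    simp [Fintype.card_prod, mul_comm]
  rw [← hcard]
  apply Set.ncard_le_ncard_of_injOn
    (fun u => if h : gridAdj n m v u then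
        (h.choose, decide ((v h.choose : ℕ) < (u h.choose : ℕ))) else (i0, true))
    (fun _ _ => Set.mem_univ _) ?_ Set.finite_univ
  intro u1 h1 u2 h2 heq
  simp only [Set.mem_setOf_eq, nbrSet] at h1 h2
  simp only [dif_pos h1, dif_pos h2] at heq
  obtain ⟨hi1, hj1⟩ := h1.choose_spec
  obtain ⟨hi2, hj2⟩ := h2.choose_spec
  have hfst : h2.choose = h1.choose := congrArg Prod.fst heq |>.symm
  have hsnd := congrArg Prod.snd heq
  simp only at hsnd
  rw [hfst] at hi2 hj2 hsnd
  set i := h1.choose with hidef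
  have hval : (u1 i : ℕ) = (u2 i : ℕ) := by
    rcases hi1 with h | h <;> rcases hi2 with h' | h' <;>
      simp only [decide_eq_decide] at hsnd <;> omega
  funext j
  by_cases hj : j = i
  · subst hj; exact Fin.ext hval
  · rw [← hj1 j hj, ← hj2 j hj]

/-- The key deterministic fact: a fully inactive cube stays inactive. -/
lemma cube_stays_inactive (n m : ℕ) (A : Set (Fin m → Fin n)) (c : Fin m → ℕ)
    (hc : ∀ i, c i + 1 < n)
    (hA : ∀ v : Fin m → Fin n, (∀ i, (v i : ℕ) = c i ∨ (v i : ℕ) = c i + 1) → v ∉ A) :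
    ∀ v : Fin m → Fin n, (∀ i, (v i : ℕ) = c i ∨ (v i : ℕ) = c i + 1) →
      v ∉ majFinal (gridAdj n m) 1 A := by
  classical
  set C : Set (Fin m → Fin n) := {v | ∀ i, (v i : ℕ) = c i ∨ (v i : ℕ) = c i + 1} with hC
  -- flip map
  have hother : ∀ i (v : Fin m → Fin n), v ∈ C → ∃ u : Fin m → Fin n, u ∈ C ∧
      u ∈ nbrSet (gridAdj n m) v ∧ u i ≠ v i ∧ ∀ j ≠ i, u j = v j := by
    intro i v hv
    have hci := hc i
    rcases hv i with hvi | hvi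
    · refine ⟨Function.update v i ⟨c i + 1, hci⟩, ?_, ?_, ?_, ?_⟩
      · intro j
        by_cases hj : j = i
        · subst hj; right; simp [Function.update_self]
        · rw [Function.update_of_ne hj]; exact hv j
      · refine ⟨i, ?_, fun j hj => by rw [Function.update_of_ne hj]⟩
        left
        simp [Function.update_self, hvi]
      · simp only [Function.update_self]
        intro h
        have := congrArg Fin.val h
        simp only [Fin.val_mk, hvi] at this
        omega
      · intro j hj; rw [Function.update_of_ne hj]
    · refine ⟨Function.update v i ⟨c i, by omega⟩, ?_, ?_, ?_, ?_⟩
      · intro j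
        by_cases hj : j = i
        · subst hj; left; simp [Function.update_self]
        · rw [Function.update_of_ne hj]; exact hv j
      · refine ⟨i, ?_, fun j hj => by rw [Function.update_of_ne hj]⟩
        right
        simp [Function.update_self, hvi]
      · simp only [Function.update_self]
        intro h
        have := congrArg Fin.val h
        simp only [Fin.val_mk, hvi] at this
        omega
      · intro j hj; rw [Function.update_of_ne hj]
  have key : ∀ s : ℕ, ∀ v ∈ C, v ∉ (majStep (gridAdj n m) 1)^[s] A := by
    intro s
    induction s with
    | zero => intro v hv; exact hA v hv
    | succ s ih =>
      intro v hv hmem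
      rw [Function.iterate_succ_apply'] at hmem
      set B := (majStep (gridAdj n m) 1)^[s] A with hB
      rcases hmem with hmem | hmem
      · exact ih v hv hmem
      · -- the flip neighbours
        simp only [Set.mem_setOf_eq] at hmem
        set N := nbrSet (gridAdj n m) v with hN
        have hflip : ∀ i : Fin m, ∃ u, u ∈ C ∧ u ∈ N ∧ u i ≠ v i ∧ ∀ j ≠ i, u j = v j :=
          fun i => hother i v hv
        choose u hu1 hu2 hu3 hu4 using hflip
        have huinj : Function.Injective u := by
          intro i j hij
          by_contra hne
          have h1 : u i j = v j := hu4 i j (Ne.symm hne)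
          have h2 : u j j ≠ v j := hu3 j
          rw [← hij] at h2
          exact h2 h1
        set D : Set (Fin m → Fin n) := Set.range u with hD
        have hDN : D ⊆ N := by rintro _ ⟨i, rfl⟩; exact hu2 i
        have hDB : ∀ x ∈ D, x ∉ B := by rintro _ ⟨i, rfl⟩; exact ih (u i) (hu1 i)
        have hDcard : D.ncard = m := by
          rw [hD, ← Set.image_univ, Set.ncard_image_of_injective _ huinj,
            Set.ncard_univ, Nat.card_eq_fintype_card, Fintype.card_fin]
        have hsub : N ∩ B ⊆ N \ D := by
          rintro x ⟨hx1, hx2⟩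
          exact ⟨hx1, fun hxD => hDB x hxD hx2⟩
        have h1 : (N ∩ B).ncard ≤ (N \ D).ncard :=
          Set.ncard_le_ncard hsub ((Set.toFinite N).diff)
        have h2 : (N \ D).ncard = N.ncard - D.ncard :=
          Set.ncard_diff hDN (Set.toFinite D)
        have h3 : D.ncard ≤ N.ncard := Set.ncard_le_ncard hDN (Set.toFinite N)
        have h4 : N.ncard ≤ 2 * m := grid_deg_le v
        omega
  intro v hv hmem
  obtain ⟨s, hs⟩ := Set.mem_iUnion.mp hmem
  exact key s v hv hs

end Det

section Prob

open scoped Classical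

variable {W : Type*} [Fintype W] [DecidableEq W]

/-- The Bernoulli weight of a subset. -/
noncomputable def bw (p : ℝ) (A : Finset W) : ℝ :=
  p ^ A.card * (1 - p) ^ (Fintype.card W - A.card)

lemma bw_nonneg {p : ℝ} (hp0 : 0 ≤ p) (hp1 : p ≤ 1) (A : Finset W) : 0 ≤ bw p A :=
  mul_nonneg (pow_nonneg hp0 _) (pow_nonneg (by linarith) _)

lemma sum_bw (p : ℝ) : ∑ A : Finset W, bw p A = 1 := by
  classical
  have h := Finset.prod_add (fun _ : W => p) (fun _ : W => 1 - p) Finset.univ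
  simp only [add_sub_cancel, Finset.prod_const, one_pow, Finset.powerset_univ,
    Finset.card_univ_diff] at h
  simp only [bw]
  exact h.symm

lemma sum_bw_erase (p : ℝ) (a : W) (G : Finset W → ℝ) (hG : ∀ A, G (A.erase a) = G A) :
    ∑ A : Finset W, (if a ∈ A then (0:ℝ) else bw p A * G A)
      = (1 - p) * ∑ A : Finset W, bw p A * G A := by
  classical
  have hsplit : ∑ A : Finset W, bw p A * G A
      = (∑ A ∈ Finset.univ.filter (fun A : Finset W => a ∈ A), bw p A * G A)
        + ∑ A ∈ Finset.univ.filter (fun A : Finset W => a ∉ A), bw p A * G A := by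
    rw [← Finset.sum_filter_add_sum_filter_not Finset.univ (fun A : Finset W => a ∈ A)]
  have hbij : ∑ A ∈ Finset.univ.filter (fun A : Finset W => a ∈ A), bw p A * G A
      = ∑ A ∈ Finset.univ.filter (fun A : Finset W => a ∉ A),
          bw p (insert a A) * G A := by
    refine Finset.sum_nbij' (fun A => A.erase a) (fun A => insert a A) ?_ ?_ ?_ ?_ ?_
    · intro A hA
      simp only [Finset.mem_filter, Finset.mem_univ, true_and] at hA ⊢
      simp [hA]
    · intro A hA
      simp only [Finset.mem_filter, Finset.mem_univ, true_and] at hA ⊢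
      simp
    · intro A hA
      simp only [Finset.mem_filter, Finset.mem_univ, true_and] at hA
      exact Finset.insert_erase hA
    · intro A hA
      simp only [Finset.mem_filter, Finset.mem_univ, true_and] at hA
      exact Finset.erase_insert hA
    · intro A hA
      simp only [Finset.mem_filter, Finset.mem_univ, true_and] at hA
      rw [Finset.insert_erase hA]
      congr 1
      rw [← hG A]
  have hkey : ∀ A ∈ Finset.univ.filter (fun A : Finset W => a ∉ A),
      (1 - p) * (bw p (insert a A) * G A) = p * (bw p A * G A) := by
    intro A hA
    simp only [Finset.mem_filter, Finset.mem_univ, true_and] at hA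
    have hcard : (insert a A).card = A.card + 1 := Finset.card_insert_of_notMem hA
    have hlt : A.card < Fintype.card W := by
      have : A ⊂ Finset.univ := Finset.ssubset_univ_iff.mpr (fun h => hA (h ▸ Finset.mem_univ a))
      simpa [Finset.card_univ] using Finset.card_lt_card this
    have h1 : Fintype.card W - (A.card + 1) + 1 = Fintype.card W - A.card := by omega
    have h2 : (1 - p) * (1 - p) ^ (Fintype.card W - (A.card + 1))
        = (1 - p) ^ (Fintype.card W - A.card) := by
      rw [← pow_succ', h1]
    unfold bw
    rw [hcard, ← h2, pow_succ]
    ring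
  have hfilter : ∑ A : Finset W, (if a ∈ A then (0:ℝ) else bw p A * G A)
      = ∑ A ∈ Finset.univ.filter (fun A : Finset W => a ∉ A), bw p A * G A := by
    rw [Finset.sum_filter]
    apply Finset.sum_congr rfl
    intro A _
    by_cases h : a ∈ A <;> simp [h]
  rw [hfilter]
  have := Finset.sum_congr rfl hkey
  rw [← Finset.mul_sum, ← hbij] at this
  rw [← Finset.mul_sum] at this
  -- this : (1-p) * ∑_{a ∈ A} = p * ∑_{a ∉ A}
  have goal : (1 - p) * ∑ A ∈ Finset.univ.filter (fun A : Finset W => a ∉ A), bw p A * G A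
      + (1 - p) * ∑ A ∈ Finset.univ.filter (fun A : Finset W => a ∈ A), bw p A * G A
      = ∑ A ∈ Finset.univ.filter (fun A : Finset W => a ∉ A), bw p A * G A := by
    rw [this]; ring
  rw [hsplit]
  linarith [goal]

lemma sum_bw_avoid (p : ℝ) (S : Finset W) (F : Finset W → ℝ) (hF : ∀ A, F (A \ S) = F A) :
    ∑ A : Finset W, (if Disjoint A S then bw p A * F A else 0)
      = (1 - p) ^ S.card * ∑ A : Finset W, bw p A * F A := by
  classical
  induction S using Finset.induction generalizing F with
  | empty => simp
  | @insert a S ha ih =>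
    have hstep : ∀ A : Finset W, (if Disjoint A (insert a S) then bw p A * F A else 0)
        = (if a ∈ A then (0:ℝ) else bw p A * (if Disjoint A S then F A else 0)) := by
      intro A
      by_cases h1 : a ∈ A
      · rw [if_neg, if_pos h1]
        intro hd
        exact (Finset.disjoint_left.mp hd h1) (Finset.mem_insert_self a S)
      · rw [if_neg h1]
        by_cases h2 : Disjoint A S
        · rw [if_pos, if_pos h2]
          rw [Finset.disjoint_insert_right]
          exact ⟨h1, h2⟩
        · rw [if_neg, if_neg h2, mul_zero]
          intro hd
          exact h2 (Finset.disjoint_insert_right.mp hd).2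
    simp only [hstep]
    set G : Finset W → ℝ := fun A => if Disjoint A S then F A else 0 with hGdef
    have hG : ∀ A, G (A.erase a) = G A := by
      intro A
      have hdis : Disjoint (A.erase a) S ↔ Disjoint A S := by
        constructor
        · intro h
          rw [Finset.disjoint_left]
          intro x hx hxS
          have hxa : x ≠ a := fun he => ha (he ▸ hxS)
          exact Finset.disjoint_left.mp h (Finset.mem_erase.mpr ⟨hxa, hx⟩) hxS
        · intro h
          exact Finset.disjoint_of_subset_left (Finset.erase_subset a A) h
      simp only [hGdef, hdis]
      by_cases h2 : Disjoint A S
      · rw [if_pos h2, if_pos h2, ← hF (A.erase a), ← hF A]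
        congr 1
        ext x
        simp only [Finset.mem_sdiff, Finset.mem_insert, Finset.mem_erase]
        tauto
      · rw [if_neg h2, if_neg h2]
    have hF' : ∀ A, F (A \ S) = F A := by
      intro A
      rw [← hF (A \ S), ← hF A]
      congr 1
      ext x
      simp only [Finset.mem_sdiff, Finset.mem_insert]
      tauto
    rw [sum_bw_erase p a G hG]
    rw [show (∑ A : Finset W, bw p A * G A)
        = ∑ A : Finset W, (if Disjoint A S then bw p A * F A else 0) from by
      apply Finset.sum_congr rfl; intro A _
      simp only [hGdef]; by_cases h : Disjoint A S <;> simp [h]]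
    rw [ih F hF', Finset.card_insert_of_notMem ha, pow_succ]
    ring

/-- The product formula for disjoint "target" sets. -/
lemma sum_bw_prod (p : ℝ) (K : ℕ) (S : ℕ → Finset W)
    (hdisj : ∀ i j, i < K → j < K → i ≠ j → Disjoint (S i) (S j)) :
    ∑ A : Finset W, bw p A * ∏ j ∈ Finset.range K, (if Disjoint A (S j) then 0 else 1)
      = ∏ j ∈ Finset.range K, (1 - (1 - p) ^ (S j).card) := by
  classical
  induction K with
  | zero => simp [sum_bw]
  | succ K ih =>
    have hd' : ∀ i j, i < K → j < K → i ≠ j → Disjoint (S i) (S j) :=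
      fun i j hi hj => hdisj i j (by omega) (by omega)
    set F : Finset W → ℝ := fun A => ∏ j ∈ Finset.range K, (if Disjoint A (S j) then 0 else 1)
      with hFdef
    have hF : ∀ A, F (A \ S K) = F A := by
      intro A
      simp only [hFdef]
      apply Finset.prod_congr rfl
      intro j hj
      rw [Finset.mem_range] at hj
      have hdSj : Disjoint (A \ S K) (S j) ↔ Disjoint A (S j) := by
        constructor
        · intro h
          rw [Finset.disjoint_left]
          intro x hx hxS
          have hxK : x ∉ S K := fun hxK =>
            Finset.disjoint_left.mp (hdisj j K (by omega) (by omega) (by omega)) hxS hxK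
          exact Finset.disjoint_left.mp h (Finset.mem_sdiff.mpr ⟨hx, hxK⟩) hxS
        · intro h
          exact Finset.disjoint_of_subset_left (Finset.sdiff_subset) h
      simp only [hdSj]
    have hsplit : ∀ A : Finset W,
        bw p A * ∏ j ∈ Finset.range (K+1), (if Disjoint A (S j) then 0 else 1)
        = bw p A * F A - (if Disjoint A (S K) then bw p A * F A else 0) := by
      intro A
      rw [Finset.prod_range_succ]
      by_cases h : Disjoint A (S K)
      · rw [if_pos h, if_pos h]; ring
      · rw [if_neg h, if_neg h]; simp only [hFdef]; ring
    simp only [hsplit]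
    have hihF : (∑ A : Finset W, bw p A * F A)
        = ∏ j ∈ Finset.range K, (1 - (1 - p) ^ (S j).card) := ih hd'
    rw [Finset.sum_sub_distrib, sum_bw_avoid p (S K) F hF, hihF, Finset.prod_range_succ]
    ring

end Prob

section Main

open scoped Classical

variable (n m : ℕ)

/-- Base corner of the `t`-th cube. -/
def cubC (t : ℕ) : Fin m → ℕ := fun i => if (i : ℕ) = 0 then 2 * t else 0

/-- The `t`-th cube as a finset. -/
noncomputable def cubF (t : ℕ) : Finset (Fin m → Fin n) :=
  Finset.univ.filter (fun v => ∀ i, (v i : ℕ) = cubC m t i ∨ (v i : ℕ) = cubC m t i + 1)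

lemma cubF_card_le (t : ℕ) : (cubF n m t).card ≤ 2 ^ m := by
  classical
  have : (Finset.univ : Finset (Fin m → Bool)).card = 2 ^ m := by
    simp [Finset.card_univ]
  rw [← this]
  apply Finset.card_le_card_of_injOn (fun v i => decide ((v i : ℕ) = cubC m t i + 1))
    (fun _ _ => Finset.mem_univ _)
  intro v1 h1 v2 h2 heq
  simp only [cubF, Finset.mem_coe, Finset.mem_filter, Finset.mem_univ, true_and] at h1 h2
  funext i
  have hi := congrFun heq i
  simp only [decide_eq_decide] at hi
  rcases h1 i with ha | ha <;> rcases h2 i with hb | hb <;> exact Fin.ext (by omega)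

lemma cubF_disjoint (hm : 2 ≤ m) {t t' : ℕ} (h : t ≠ t') :
    Disjoint (cubF n m t) (cubF n m t') := by
  classical
  rw [Finset.disjoint_left]
  intro v hv hv'
  simp only [cubF, Finset.mem_filter, Finset.mem_univ, true_and] at hv hv'
  have i0 : Fin m := ⟨0, by omega⟩
  have h1 := hv ⟨0, by omega⟩
  have h2 := hv' ⟨0, by omega⟩
  simp only [cubC] at h1 h2
  norm_num at h1 h2
  omega

lemma initProb_eq (V : Type*) [Fintype V] (p : ℝ) (E : Set V → Prop) :
    initProb V p E = ∑ A : Finset V, if E ↑A then bw p A else 0 := by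
  unfold initProb bw
  apply Finset.sum_congr rfl
  intros; split <;> rfl

set_option maxHeartbeats 1000000 in
lemma per_n_bound (hm : 2 ≤ m) (p : ℝ) (hp0 : 0 ≤ p) (hp1 : p < 1) :
    1 - (1 - (1 - p) ^ 2 ^ m) ^ ((n - 1) / 2)
      ≤ initProb (Fin m → Fin n) p (fun A => majFinal (gridAdj n m) 1 A ≠ Set.univ) ∧
    initProb (Fin m → Fin n) p (fun A => majFinal (gridAdj n m) 1 A ≠ Set.univ) ≤ 1 := by
  classical
  set K := (n - 1) / 2 with hK
  set E : Set (Fin m → Fin n) → Prop := fun A => majFinal (gridAdj n m) 1 A ≠ Set.univ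
    with hE
  have hp1' : (0:ℝ) ≤ 1 - p := by linarith
  have hple : (1:ℝ) - p ≤ 1 := by linarith
  have hbridge : initProb (Fin m → Fin n) p E
      = ∑ A : Finset (Fin m → Fin n), (if E ↑A then bw p A else 0) := by
    rw [initProb_eq]
    exact Finset.sum_congr rfl fun A _ => by
      split_ifs <;> first | rfl | (exact absurd ‹_› ‹_›)
  rw [hbridge]
  have hupper : ∑ A : Finset (Fin m → Fin n), (if E ↑A then bw p A else 0) ≤ 1 := by
    rw [← sum_bw (W := Fin m → Fin n) p]
    apply Finset.sum_le_sum
    intro A _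
    split
    · exact le_refl _
    · exact bw_nonneg hp0 (by linarith) A
  have hcompl : ∀ A : Finset (Fin m → Fin n),
      (if E ↑A then bw p A else 0) = bw p A - (if ¬ E ↑A then bw p A else 0) := by
    intro A
    by_cases h : E ↑A
    · rw [if_pos h, if_neg (not_not_intro h)]; ring
    · rw [if_neg h, if_pos h]; ring
  have hmono : ∑ A : Finset (Fin m → Fin n), (if ¬ E ↑A then bw p A else 0)
      ≤ ∑ A : Finset (Fin m → Fin n),
          bw p A * ∏ t ∈ Finset.range K, (if Disjoint A (cubF n m t) then 0 else 1) := by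
    apply Finset.sum_le_sum
    intro A _
    by_cases hEA : E ↑A
    · rw [if_neg (by simpa using hEA)]
      apply mul_nonneg (bw_nonneg hp0 (by linarith) A)
      apply Finset.prod_nonneg
      intro t _
      split <;> norm_num
    · rw [if_pos (by simpa using hEA)]
      have hprod1 : (∏ t ∈ Finset.range K, (if Disjoint A (cubF n m t) then (0:ℝ) else 1)) = 1 := by
        apply Finset.prod_eq_one
        intro t ht
        rw [Finset.mem_range] at ht
        rw [if_neg]
        intro hdis
        have hc : ∀ i : Fin m, cubC m t i + 1 < n := by
          intro i
          simp only [cubC]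
          split <;> omega
        have hA' : ∀ v : Fin m → Fin n,
            (∀ i, (v i : ℕ) = cubC m t i ∨ (v i : ℕ) = cubC m t i + 1) → v ∉ (↑A : Set (Fin m → Fin n)) := by
          intro v hv hvA
          have hvF : v ∈ cubF n m t := by
            simp only [cubF, Finset.mem_filter, Finset.mem_univ, true_and]
            exact hv
          exact Finset.disjoint_left.mp hdis (Finset.mem_coe.mp hvA) hvF
        have hfin := cube_stays_inactive n m (↑A) (cubC m t) hc hA'
          (fun i => ⟨cubC m t i, by have := hc i; omega⟩) (fun i => Or.inl rfl)
        simp only [hE, not_not] at hEA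
        rw [hEA] at hfin
        exact hfin (Set.mem_univ _)
      rw [hprod1, mul_one]
  have hprod := sum_bw_prod p K (cubF n m)
    (fun i j _ _ hij => cubF_disjoint n m hm hij)
  have hfac : (∏ t ∈ Finset.range K, (1 - (1 - p) ^ (cubF n m t).card))
      ≤ (1 - (1 - p) ^ 2 ^ m) ^ K := by
    rw [show ((1 - (1 - p) ^ 2 ^ m) ^ K : ℝ)
        = ∏ _t ∈ Finset.range K, (1 - (1 - p) ^ 2 ^ m) from by
      rw [Finset.prod_const, Finset.card_range]]
    apply Finset.prod_le_prod
    · intro t _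
      have : (1 - p) ^ (cubF n m t).card ≤ 1 := pow_le_one₀ hp1' hple
      linarith
    · intro t _
      have : (1 - p) ^ (2 ^ m) ≤ (1 - p) ^ (cubF n m t).card :=
        pow_le_pow_of_le_one hp1' hple (cubF_card_le n m t)
      linarith
  have hsum_eq : ∑ A : Finset (Fin m → Fin n), (if E ↑A then bw p A else 0)
      = 1 - ∑ A : Finset (Fin m → Fin n), (if ¬ E ↑A then bw p A else 0) := by
    rw [Finset.sum_congr rfl (fun A _ => hcompl A), Finset.sum_sub_distrib, sum_bw]
  refine ⟨?_, hupper⟩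
  rw [hsum_eq]
  have := le_trans hmono (le_of_eq hprod)
  linarith [le_trans this hfac]

end Main


/-- For every fixed `m ≥ 2` and `p ∈ [0,1)`, the strict majority bootstrap
percolation process `M₁([n]^m; p)` a.a.s. does not disseminate, so its critical probability
is `1`. The key deterministic fact: an initially fully inactive translate of the cube
`{1,2}^m` stays inactive forever. -/
theorem statement_16 (m : ℕ) (hm : 2 ≤ m) (p : ℝ) (hp0 : 0 ≤ p) (hp1 : p < 1) :
    Tendsto (fun n => initProb (Fin m → Fin n) p
        (fun A => majFinal (gridAdj n m) 1 A ≠ Set.univ)) atTop (nhds 1) ∧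
    ∀ (n : ℕ) (A : Set (Fin m → Fin n)) (c : Fin m → ℕ),
      (∀ i, c i + 1 < n) →
      (∀ v : Fin m → Fin n, (∀ i, (v i : ℕ) = c i ∨ (v i : ℕ) = c i + 1) → v ∉ A) →
      ∀ v : Fin m → Fin n, (∀ i, (v i : ℕ) = c i ∨ (v i : ℕ) = c i + 1) →
        v ∉ majFinal (gridAdj n m) 1 A := by
  constructor
  · set q := (1 - p) ^ 2 ^ m with hq
    have hq0 : 0 < q := pow_pos (by linarith) _
    have hq1 : q ≤ 1 := pow_le_one₀ (by linarith) (by linarith)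
    have hr0 : (0:ℝ) ≤ 1 - q := by linarith
    have hr1 : 1 - q < 1 := by linarith
    have hKtend : Tendsto (fun n : ℕ => (n - 1) / 2) atTop atTop := by
      apply Filter.tendsto_atTop_atTop.mpr
      intro b
      exact ⟨2 * b + 1, fun n hn => by omega⟩
    have hpow : Tendsto (fun n : ℕ => (1 - q) ^ ((n - 1) / 2)) atTop (nhds 0) :=
      (tendsto_pow_atTop_nhds_zero_of_lt_one hr0 hr1).comp hKtend
    have hlow : Tendsto (fun n : ℕ => 1 - (1 - q) ^ ((n - 1) / 2)) atTop (nhds 1) := by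
      have h := (tendsto_const_nhds (x := (1:ℝ)) (f := (atTop : Filter ℕ))).sub hpow
      simpa using h
    exact tendsto_of_tendsto_of_tendsto_of_le_of_le hlow tendsto_const_nhds
      (fun n => (per_n_bound n m hm p hp0 hp1).1)
      (fun n => (per_n_bound n m hm p hp0 hp1).2)
  · intro n A c hc hA
    exact cube_stays_inactive n m A c hc hA
end

section
/- Let n be even and 1 ≤ r ≤ n/2, and let k ∈ ℕ with 2k+1 ≤ n. Then there exists a k-admissible r-tuple (M₁,…,M_r) of perfect matchings of [n]². Explicitly, if σ is a cyclic permutation of the elements of [n/2], then taking M_j to be the perfect matching that matches each vertex (x,y) ∈ [n/2] × [n] to the vertex (n/2 + σ^{j−1}(x), y) yields such a k-admissible r-tuple: the matchings M₁,…,M_r are pairwise disjoint perfect matchings of [n]², and M₁ ∪ … ∪ M_r ∪ L(n,k) has no multiple edges. -/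
open Finset Filter

open Maj

section Aux

open Equiv Equiv.Perm

lemma aux_pow_ne {h : ℕ} (σ : Equiv.Perm (Fin h)) (hc : σ.IsCycle) (hf : ∀ x, σ x ≠ x)
    {m : ℕ} (hm0 : 0 < m) (hmh : m < h) (u : Fin h) : (σ ^ m) u ≠ u := by
  intro hu
  have h1 : σ ^ m = 1 := hc.pow_eq_one_iff.mpr ⟨u, hf u, hu⟩
  have hdvd : orderOf σ ∣ m := orderOf_dvd_of_pow_eq_one h1
  have hsupp : σ.support = Finset.univ := by
    ext x; simp [Equiv.Perm.mem_support, hf x]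
  have ho : orderOf σ = h := by
    rw [hc.orderOf, hsupp, Finset.card_univ, Fintype.card_fin]
  rw [ho] at hdvd
  exact absurd (Nat.le_of_dvd hm0 hdvd) (by omega)

lemma aux_pow_ne_pow {h r : ℕ} (σ : Equiv.Perm (Fin h)) (hc : σ.IsCycle) (hf : ∀ x, σ x ≠ x)
    (hr : r ≤ h) (i j : Fin r) (hij : i ≠ j) (x : Fin h) :
    (σ ^ (i : ℕ)) x ≠ (σ ^ (j : ℕ)) x := by
  wlog hlt : (i : ℕ) < (j : ℕ) generalizing i j x
  · have hlt' : (j : ℕ) < (i : ℕ) := by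
      rcases Nat.lt_trichotomy (i : ℕ) (j : ℕ) with h' | h' | h'
      · exact absurd h' hlt
      · exact absurd (Fin.ext h') hij
      · exact h'
    exact fun e => this j i hij.symm x hlt' e.symm
  intro he
  have hkey : (σ ^ ((j : ℕ) - (i : ℕ))) ((σ ^ (i : ℕ)) x) = (σ ^ (i : ℕ)) x := by
    rw [← Equiv.Perm.mul_apply, ← pow_add, Nat.sub_add_cancel hlt.le, ← he]
  exact aux_pow_ne σ hc hf (by omega) (by omega : (j : ℕ) - (i : ℕ) < h) _ hkey

lemma exists_sigma (h r : ℕ) (hr : r ≤ h) : ∃ σ : Equiv.Perm (Fin h),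
    ∀ i j : Fin r, i ≠ j → ∀ x, (σ ^ (i : ℕ)) x ≠ (σ ^ (j : ℕ)) x := by
  rcases le_or_gt 2 h with h2 | h2
  · obtain ⟨m, rfl⟩ : ∃ m, h = m + 2 := ⟨h - 2, by omega⟩
    refine ⟨finRotate (m + 2), aux_pow_ne_pow _ isCycle_finRotate ?_ hr⟩
    intro x
    exact Equiv.Perm.mem_support.mp (by rw [support_finRotate]; exact Finset.mem_univ x)
  · exact ⟨1, fun i j hij x => absurd (Fin.ext (by omega)) hij⟩

theorem Equiv.Perm.apply_inv_self {α : Type*} (f : Equiv.Perm α) (x : α) : f (f⁻¹ x) = x :=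
  (Equiv.eq_symm_apply f).mp rfl

theorem Equiv.Perm.inv_apply_self {α : Type*} (f : Equiv.Perm α) (x : α) : f⁻¹ (f x) = x :=
  Equiv.Perm.inv_eq_iff_eq.mpr rfl

lemma keyAdm (n k r : ℕ) (hn2 : 2 ≤ n) (hh : n = 2 * (n / 2))
    (M : Fin r → Maj.Torus n → Maj.Torus n) (σ : Equiv.Perm (Fin (n / 2)))
    (hσ : ∀ i j : Fin r, i ≠ j → ∀ x : Fin (n / 2), (σ ^ (i : ℕ)) x ≠ (σ ^ (j : ℕ)) x)
    (hM : ∀ (j : Fin r) (x : Fin (n / 2)) (y : ZMod n),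
          M j (((x : ℕ) : ZMod n), y) =
            (((n / 2 + (((σ ^ (j : ℕ)) x : Fin (n / 2)) : ℕ) : ℕ) : ZMod n), y) ∧
          M j (((n / 2 + (((σ ^ (j : ℕ)) x : Fin (n / 2)) : ℕ) : ℕ) : ZMod n), y) =
            (((x : ℕ) : ZMod n), y)) :
    Maj.Admissible n k M := by
  haveI hNe : NeZero n := ⟨by omega⟩
  have cinj : ∀ a b : ℕ, a < n → b < n → ((a : ZMod n) = (b : ZMod n)) → a = b := by
    intro a b ha hb e
    have := congrArg ZMod.val e
    rwa [ZMod.val_cast_of_lt ha, ZMod.val_cast_of_lt hb] at this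
  have cover : ∀ z : ZMod n, (∃ x : Fin (n / 2), z = ((x : ℕ) : ZMod n)) ∨
      (∃ w : Fin (n / 2), z = ((n / 2 + (w : ℕ) : ℕ) : ZMod n)) := by
    intro z
    have hv : z.val < n := ZMod.val_lt z
    have hz : ((z.val : ℕ) : ZMod n) = z := ZMod.natCast_rightInverse z
    rcases lt_or_ge z.val (n / 2) with hl | hl
    · exact Or.inl ⟨⟨z.val, hl⟩, hz.symm⟩
    · refine Or.inr ⟨⟨z.val - n / 2, by omega⟩, ?_⟩
      have : n / 2 + (z.val - n / 2) = z.val := by omega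
      rw [this, hz]
  have MHigh : ∀ (j : Fin r) (w : Fin (n / 2)) (y : ZMod n),
      M j (((n / 2 + (w : ℕ) : ℕ) : ZMod n), y) =
        (((((σ ^ (j : ℕ))⁻¹ w : Fin (n / 2)) : ℕ) : ZMod n), y) := by
    intro j w y
    have := (hM j ((σ ^ (j : ℕ))⁻¹ w) y).2
    rwa [Equiv.Perm.apply_inv_self] at this
  have hbound : ∀ x : Fin (n / 2), (x : ℕ) < n := fun x => by omega
  have hbound2 : ∀ x : Fin (n / 2), n / 2 + (x : ℕ) < n := fun x => by omega
  have snd : ∀ (i : Fin r) (v : Maj.Torus n), (M i v).2 = v.2 := by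
    rintro i ⟨z, y⟩
    rcases cover z with ⟨x, rfl⟩ | ⟨w, rfl⟩
    · rw [(hM i x y).1]
    · rw [MHigh i w y]
  refine ⟨fun i => ⟨?_, ?_⟩, ?_, ?_⟩
  · rintro ⟨z, y⟩
    rcases cover z with ⟨x, rfl⟩ | ⟨w, rfl⟩
    · rw [(hM i x y).1, MHigh, Equiv.Perm.inv_apply_self]
    · rw [MHigh i w y, (hM i ((σ ^ (i : ℕ))⁻¹ w) y).1, Equiv.Perm.apply_inv_self]
  · rintro ⟨z, y⟩ he
    rcases cover z with ⟨x, rfl⟩ | ⟨w, rfl⟩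
    · rw [(hM i x y).1] at he
      have := cinj _ _ (hbound2 _) (hbound _) (congrArg Prod.fst he)
      have := x.2
      omega
    · rw [MHigh i w y] at he
      have := cinj _ _ (hbound _) (hbound2 _) (congrArg Prod.fst he)
      have := ((σ ^ (i : ℕ))⁻¹ w).2
      omega
  · rintro i j hij ⟨z, y⟩ he
    rcases cover z with ⟨x, rfl⟩ | ⟨w, rfl⟩
    · rw [(hM i x y).1, (hM j x y).1] at he
      have h1 := cinj _ _ (hbound2 _) (hbound2 _) (congrArg Prod.fst he)
      exact hσ i j hij x (Fin.ext (by omega))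
    · rw [MHigh i w y, MHigh j w y] at he
      have h1 := cinj _ _ (hbound _) (hbound _) (congrArg Prod.fst he)
      have h2 : (σ ^ (i : ℕ))⁻¹ w = (σ ^ (j : ℕ))⁻¹ w := Fin.ext h1
      refine hσ i j hij ((σ ^ (i : ℕ))⁻¹ w) ?_
      rw [Equiv.Perm.apply_inv_self, h2, Equiv.Perm.apply_inv_self]
  · rintro i v ⟨a, b, ha, hb, he⟩
    haveI : Fact (1 < n) := ⟨by omega⟩
    have h2 := congrArg Prod.snd he
    rw [snd i v] at h2
    simp only [Prod.snd_add] at h2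
    have hb0 : ((b : ZMod n)) = 0 := by
      have := h2
      nth_rewrite 1 [← add_zero v.2] at this
      exact (add_left_cancel this).symm
    rcases hb with rfl | rfl
    · simp at hb0
    · rw [Int.cast_neg, Int.cast_one, neg_eq_zero] at hb0
      exact one_ne_zero hb0

def mkM (n r : ℕ) (σ : Equiv.Perm (Fin (n / 2))) (j : Fin r) (v : Maj.Torus n) :
    Maj.Torus n :=
  (if hz : (v.1).val < n / 2
    then ((n / 2 + (((σ ^ (j : ℕ)) ⟨(v.1).val, hz⟩ : Fin (n / 2)) : ℕ) : ℕ) : ZMod n)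
    else if hz2 : (v.1).val - n / 2 < n / 2
      then (((((σ ^ (j : ℕ))⁻¹ ⟨(v.1).val - n / 2, hz2⟩ : Fin (n / 2)) : ℕ)) : ZMod n)
      else v.1,
   v.2)

lemma mkM_spec (n r : ℕ) (hn2 : 2 ≤ n) (hh : n = 2 * (n / 2))
    (σ : Equiv.Perm (Fin (n / 2))) :
    ∀ (j : Fin r) (x : Fin (n / 2)) (y : ZMod n),
      mkM n r σ j (((x : ℕ) : ZMod n), y) =
        (((n / 2 + (((σ ^ (j : ℕ)) x : Fin (n / 2)) : ℕ) : ℕ) : ZMod n), y) ∧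
      mkM n r σ j (((n / 2 + (((σ ^ (j : ℕ)) x : Fin (n / 2)) : ℕ) : ℕ) : ZMod n), y) =
        (((x : ℕ) : ZMod n), y) := by
  haveI hNe : NeZero n := ⟨by omega⟩
  intro j x y
  constructor
  · have hv : ((((x : ℕ) : ZMod n)).val) = (x : ℕ) := ZMod.val_cast_of_lt (by omega)
    have hlt : ((((x : ℕ) : ZMod n)).val) < n / 2 := by rw [hv]; exact x.2
    have hxx : (⟨(((x : ℕ) : ZMod n)).val, hlt⟩ : Fin (n / 2)) = x := Fin.ext hv
    unfold mkM
    rw [dif_pos hlt, hxx]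
  · have hb : n / 2 + (((σ ^ (j : ℕ)) x : Fin (n / 2)) : ℕ) < n := by
      have := ((σ ^ (j : ℕ)) x).2; omega
    have hv : ((((n / 2 + (((σ ^ (j : ℕ)) x : Fin (n / 2)) : ℕ) : ℕ) : ZMod n)).val)
        = n / 2 + (((σ ^ (j : ℕ)) x : Fin (n / 2)) : ℕ) := ZMod.val_cast_of_lt hb
    have hlt2 : ¬ ((((n / 2 + (((σ ^ (j : ℕ)) x : Fin (n / 2)) : ℕ) : ℕ) : ZMod n)).val) < n / 2 := by
      rw [hv]; omega
    have hlt3 : ((((n / 2 + (((σ ^ (j : ℕ)) x : Fin (n / 2)) : ℕ) : ℕ) : ZMod n)).val) - n / 2 < n / 2 := by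
      rw [hv]; have := ((σ ^ (j : ℕ)) x).2; omega
    have hxx : (⟨((((n / 2 + (((σ ^ (j : ℕ)) x : Fin (n / 2)) : ℕ) : ℕ) : ZMod n)).val) - n / 2, hlt3⟩ : Fin (n / 2)) = (σ ^ (j : ℕ)) x :=
      Fin.ext (show ((((n / 2 + (((σ ^ (j : ℕ)) x : Fin (n / 2)) : ℕ) : ℕ) : ZMod n)).val) - n / 2 = (((σ ^ (j : ℕ)) x : Fin (n / 2)) : ℕ) by rw [hv]; omega)
    unfold mkM
    rw [dif_neg hlt2, dif_pos hlt3, hxx, Equiv.Perm.inv_apply_self]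

end Aux

/-- For even `n`, `1 ≤ r ≤ n/2` and `2k+1 ≤ n`, `k`-admissible `r`-tuples
of perfect matchings of `[n]²` exist; explicitly, for any cyclic permutation `σ` of `[n/2]`,
matching each `(x,y) ∈ [n/2] × [n]` to `(n/2 + σ^{j-1}(x), y)` in the `j`-th matching gives
a `k`-admissible `r`-tuple. -/
theorem statement_19 (n k r : ℕ) (hn : Even n) (hr1 : 1 ≤ r) (hr2 : 2 * r ≤ n)
    (hkn : 2 * k + 1 ≤ n) :
    (∃ M : Fin r → Torus n → Torus n, Admissible n k M) ∧
    ∀ σ : Equiv.Perm (Fin (n / 2)),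
      (σ.IsCycle ∧ ∀ x, σ x ≠ x) →
      ∀ M : Fin r → Torus n → Torus n,
        (∀ (j : Fin r) (x : Fin (n / 2)) (y : ZMod n),
          M j (((x : ℕ) : ZMod n), y) =
            (((n / 2 + (((σ ^ (j : ℕ)) x : Fin (n / 2)) : ℕ) : ℕ) : ZMod n), y) ∧
          M j (((n / 2 + (((σ ^ (j : ℕ)) x : Fin (n / 2)) : ℕ) : ℕ) : ZMod n), y) =
            (((x : ℕ) : ZMod n), y)) →
        Admissible n k M := by
  have hn2 : 2 ≤ n := by
    obtain ⟨c, hc⟩ := hn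
    omega
  have hh : n = 2 * (n / 2) := by
    obtain ⟨c, hc⟩ := hn
    omega
  constructor
  · obtain ⟨σ, hσ⟩ := exists_sigma (n / 2) r (by omega)
    exact ⟨mkM n r σ, keyAdm n k r hn2 hh _ σ hσ (mkM_spec n r hn2 hh σ)⟩
  · rintro σ ⟨hc, hf⟩ M hM
    exact keyAdm n k r hn2 hh M σ (aux_pow_ne_pow σ hc hf (by omega)) hM
end
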